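/- Let U and V be n×r matrices with orthonormal columns and let Γ be the vector of principal angles between range U and range V (so cos Γ is the vector of singular values of UᵀV). Then for any PSD matrix Z ∈ S^r_+, the Frobenius distance from VZVᵀ to the cone {UAUᵀ : A ∈ S^r_+} is at most √2 · ‖Z‖_F · ‖sin Γ‖₂. -/

import Mathlib

open Matrix BigOperators

/-- The Frobenius norm of a real matrix. -/
noncomputable def frobNorm {m k : ℕ} (A : Matrix (Fin m) (Fin k) ℝ) : ℝ :=
  Real.sqrt (∑ i, ∑ j, (A i j) ^ 2)


variable {k : ℕ}

lemma trace_transpose_mul_self_nonneg {m : ℕ} (A : Matrix (Fin m) (Fin k) ℝ) :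
    0 ≤ (Aᵀ * A).trace := by
  rw [Matrix.trace]
  refine Finset.sum_nonneg fun j _ => ?_
  simp only [Matrix.diag_apply, Matrix.mul_apply, Matrix.transpose_apply]
  exact Finset.sum_nonneg fun i _ => mul_self_nonneg _

lemma psd_trace_nonneg {A : Matrix (Fin k) (Fin k) ℝ} (hA : A.PosSemidef) :
    0 ≤ A.trace := by
  refine Finset.sum_nonneg fun i _ => ?_
  have := hA.dotProduct_mulVec_nonneg (Pi.single i 1)
  simpa using this

open scoped MatrixOrder in
lemma psd_trace_mul_nonneg {A B : Matrix (Fin k) (Fin k) ℝ}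
    (hA : A.PosSemidef) (hB : B.PosSemidef) : 0 ≤ (A * B).trace := by
  have hS : CFC.sqrt A * CFC.sqrt A = A := CFC.sqrt_mul_sqrt_self A hA.nonneg
  have h1 : (A * B).trace = (CFC.sqrt A * B * CFC.sqrt A).trace := by
    conv_lhs => rw [← hS, Matrix.mul_assoc, Matrix.trace_mul_comm, Matrix.mul_assoc]
    rw [Matrix.mul_assoc]
  rw [h1]
  have : (CFC.sqrt A * B * (CFC.sqrt A)ᴴ).PosSemidef := hB.mul_mul_conjTranspose_same _
  rw [(CFC.sqrt_nonneg A).posSemidef.isHermitian.eq] at this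
  exact psd_trace_nonneg this

open scoped MatrixOrder in
lemma psd_smul_one_sub {A : Matrix (Fin k) (Fin k) ℝ} (hA : A.PosSemidef) :
    (A.trace • (1 : Matrix (Fin k) (Fin k) ℝ) - A).PosSemidef := by
  set S := CFC.sqrt A with hSdef
  have hS : S * S = A := CFC.sqrt_mul_sqrt_self A hA.nonneg
  have hSh : Sᵀ = S := by
    have := (CFC.sqrt_nonneg A).posSemidef.isHermitian.eq
    rwa [Matrix.conjTranspose_eq_transpose_of_trivial] at this
  have hsym : ∀ i j, S j i = S i j := fun i j => by
    conv_lhs => rw [← hSh]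
    simp
  refine Matrix.posSemidef_iff_dotProduct_mulVec.mpr ⟨?_, ?_⟩
  · have hAh : Aᵀ = A := by
      have := hA.1.eq
      rwa [Matrix.conjTranspose_eq_transpose_of_trivial] at this
    simp [Matrix.IsHermitian, Matrix.conjTranspose_sub, Matrix.conjTranspose_smul, hAh,
      star_trivial]
  · intro x
    have key : x ⬝ᵥ (A *ᵥ x) ≤ A.trace * (x ⬝ᵥ x) := by
      have h1 : x ⬝ᵥ (A *ᵥ x) = (S *ᵥ x) ⬝ᵥ (S *ᵥ x) := by
        rw [← hS, ← Matrix.mulVec_mulVec, dotProduct_mulVec x,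
          ← Matrix.mulVec_transpose, hSh]
      have h2 : (S *ᵥ x) ⬝ᵥ (S *ᵥ x) = ∑ i, (∑ j, S i j * x j) ^ 2 := by
        simp [dotProduct, Matrix.mulVec, sq]
      have h3 : ∀ i, (∑ j, S i j * x j) ^ 2 ≤ (∑ j, (S i j) ^ 2) * (∑ j, (x j) ^ 2) :=
        fun i => Finset.sum_mul_sq_le_sq_mul_sq _ _ _
      have h4 : A.trace = ∑ i, ∑ j, (S i j) ^ 2 := by
        rw [← hS]
        simp only [Matrix.trace, Matrix.diag_apply, Matrix.mul_apply, sq]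
        exact Finset.sum_congr rfl fun i _ => Finset.sum_congr rfl fun j _ => by
          rw [hsym i j]
      have h5 : x ⬝ᵥ x = ∑ j, (x j) ^ 2 := by simp [dotProduct, sq]
      calc x ⬝ᵥ (A *ᵥ x) = ∑ i, (∑ j, S i j * x j) ^ 2 := by rw [h1, h2]
        _ ≤ ∑ i, (∑ j, (S i j) ^ 2) * (∑ j, (x j) ^ 2) :=
            Finset.sum_le_sum fun i _ => h3 i
        _ = A.trace * (x ⬝ᵥ x) := by rw [h4, h5, Finset.sum_mul]
    have : star x ⬝ᵥ ((A.trace • (1 : Matrix (Fin k) (Fin k) ℝ) - A) *ᵥ x)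
        = A.trace * (x ⬝ᵥ x) - x ⬝ᵥ (A *ᵥ x) := by
      simp [Matrix.sub_mulVec, Matrix.smul_mulVec, dotProduct_sub,
        dotProduct_smul, star_trivial, smul_eq_mul]
    rw [this]
    linarith

lemma psd_trace_mul_le {A B : Matrix (Fin k) (Fin k) ℝ}
    (hA : A.PosSemidef) (hB : B.PosSemidef) :
    (A * B).trace ≤ A.trace * B.trace := by
  have h := psd_trace_mul_nonneg (psd_smul_one_sub hA) hB
  rw [Matrix.sub_mul, Matrix.smul_mul, Matrix.one_mul, Matrix.trace_sub,
    Matrix.trace_smul, smul_eq_mul] at h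
  linarith

lemma frob_eq {m k : ℕ} (A : Matrix (Fin m) (Fin k) ℝ) :
    frobNorm A = Real.sqrt ((Aᵀ * A).trace) := by
  unfold frobNorm
  congr 1
  rw [Matrix.trace, Finset.sum_comm]
  simp [Matrix.diag_apply, Matrix.mul_apply, Matrix.transpose_apply, sq]

theorem dist_between_faces {n r : ℕ} (U V : Matrix (Fin n) (Fin r) ℝ)
    (hU : Uᵀ * U = 1) (hV : Vᵀ * V = 1)
    (Z : Matrix (Fin r) (Fin r) ℝ) (hZ : Z.PosSemidef) :
    ∃ A : Matrix (Fin r) (Fin r) ℝ, A.PosSemidef ∧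
      frobNorm (V * Z * Vᵀ - U * A * Uᵀ) ≤
        Real.sqrt 2 * frobNorm Z *
          Real.sqrt ((1 - (Vᵀ * U) * (Vᵀ * U)ᵀ).trace) := by
  have hZt : Zᵀ = Z := by
    have := hZ.1.eq; rwa [Matrix.conjTranspose_eq_transpose_of_trivial] at this
  set W : Matrix (Fin r) (Fin r) ℝ := Vᵀ * U with hWdef
  set G : Matrix (Fin r) (Fin r) ℝ := W * Wᵀ with hGdef
  set P : Matrix (Fin n) (Fin n) ℝ := U * Uᵀ with hPdef
  set Q : Matrix (Fin n) (Fin n) ℝ := 1 - P with hQdef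
  set X : Matrix (Fin n) (Fin n) ℝ := V * Z * Vᵀ with hXdef
  -- helper collapses
  have hVV : ∀ {N : ℕ} (B : Matrix (Fin r) (Fin N) ℝ), Vᵀ * (V * B) = B := fun B => by
    rw [← Matrix.mul_assoc, hV, Matrix.one_mul]
  have hUU : ∀ {N : ℕ} (B : Matrix (Fin r) (Fin N) ℝ), Uᵀ * (U * B) = B := fun B => by
    rw [← Matrix.mul_assoc, hU, Matrix.one_mul]
  have hVU : ∀ {N : ℕ} (B : Matrix (Fin r) (Fin N) ℝ), Vᵀ * (U * B) = W * B := fun B => by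
    rw [← Matrix.mul_assoc, ← hWdef]
  have hUV : ∀ {N : ℕ} (B : Matrix (Fin r) (Fin N) ℝ), Uᵀ * (V * B) = Wᵀ * B := fun B => by
    rw [← Matrix.mul_assoc, hWdef, Matrix.transpose_mul, Matrix.transpose_transpose]
  have hWt : Uᵀ * V = Wᵀ := by
    rw [hWdef, Matrix.transpose_mul, Matrix.transpose_transpose]
  have hG1 : ∀ {N : ℕ} (B : Matrix (Fin r) (Fin N) ℝ), W * (Wᵀ * B) = G * B := fun B => by
    rw [← Matrix.mul_assoc, ← hGdef]
  refine ⟨Wᵀ * Z * W, ?_, ?_⟩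
  · have h := hZ.mul_mul_conjTranspose_same Wᵀ
    rwa [Matrix.conjTranspose_eq_transpose_of_trivial, Matrix.transpose_transpose] at h
  set t : ℝ := (Z * Z).trace with htdef
  set a : ℝ := (Z * (G * (Z * G))).trace with hadef
  set b : ℝ := (Z * (Z * G)).trace with hbdef
  set K : Matrix (Fin n) (Fin n) ℝ := U * (Wᵀ * Z * W) * Uᵀ with hKdef
  have hXt : Xᵀ = X := by
    rw [hXdef]
    simp [Matrix.transpose_mul, Matrix.mul_assoc, hZt]
  have hKt : Kᵀ = K := by
    rw [hKdef]
    simp [Matrix.transpose_mul, Matrix.mul_assoc, hZt]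
  have e1 : (X * X).trace = t := by
    have hx : X * X = V * (Z * (Z * Vᵀ)) := by
      rw [hXdef]; simp only [Matrix.mul_assoc, hVV]
    rw [hx, Matrix.trace_mul_comm, htdef]
    simp only [Matrix.mul_assoc, hV, Matrix.mul_one]
  have e2 : (X * K).trace = a := by
    have hx : X * K = V * (Z * (G * (Z * (W * Uᵀ)))) := by
      rw [hXdef, hKdef]; simp only [Matrix.mul_assoc, hVV, hVU, hG1]
    rw [hx, Matrix.trace_mul_comm, hadef]
    simp only [Matrix.mul_assoc, hWt, ← hGdef]
  have e3 : (K * K).trace = a := by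
    have hx : K * K = U * (Wᵀ * (Z * (G * (Z * (W * Uᵀ))))) := by
      rw [hKdef]; simp only [Matrix.mul_assoc, hUU, hG1]
    rw [hx, Matrix.trace_mul_comm]
    have hy : Wᵀ * (Z * (G * (Z * (W * Uᵀ)))) * U = Wᵀ * (Z * (G * (Z * W))) := by
      simp only [Matrix.mul_assoc, hU, Matrix.mul_one]
    rw [hy, Matrix.trace_mul_comm, hadef]
    simp only [Matrix.mul_assoc, ← hGdef]
  have hDD : ((X - K)ᵀ * (X - K)).trace = t - a := by
    rw [Matrix.transpose_sub, hXt, hKt, Matrix.sub_mul, Matrix.mul_sub, Matrix.mul_sub,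
      Matrix.trace_sub, Matrix.trace_sub, Matrix.trace_sub, e1, e2, e3,
      Matrix.trace_mul_comm K X, e2]
    ring
  have hPP : P * P = P := by
    rw [hPdef]; rw [Matrix.mul_assoc, hUU]
  have hPt : Pᵀ = P := by
    rw [hPdef, Matrix.transpose_mul, Matrix.transpose_transpose]
  have hQt : Qᵀ = Q := by
    rw [hQdef, Matrix.transpose_sub, Matrix.transpose_one, hPt]
  have hQQ : Q * Q = Q := by
    rw [hQdef]
    simp only [Matrix.sub_mul, Matrix.mul_sub, Matrix.one_mul, Matrix.mul_one, hPP]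
    abel
  have e4 : (X * (X * P)).trace = b := by
    have hx : X * (X * P) = V * (Z * (Z * (W * Uᵀ))) := by
      rw [hXdef, hPdef]; simp only [Matrix.mul_assoc, hVV, hVU]
    rw [hx, Matrix.trace_mul_comm, hbdef]
    simp only [Matrix.mul_assoc, hWt, ← hGdef]
  have e6 : ((X * P) * (X * P)).trace = a := by
    have hx : (X * P) * (X * P) = V * (Z * (G * (Z * (W * Uᵀ)))) := by
      rw [hXdef, hPdef]; simp only [Matrix.mul_assoc, hVV, hVU, hUV, hG1]
    rw [hx, Matrix.trace_mul_comm, hadef]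
    simp only [Matrix.mul_assoc, hWt, ← hGdef]
  have hPyth : 0 ≤ t - 2 * b + a := by
    have h0 := trace_transpose_mul_self_nonneg (Q * X * Q)
    have hE : (Q * X * Q)ᵀ * (Q * X * Q) = Q * (X * (Q * (X * Q))) := by
      rw [Matrix.transpose_mul, Matrix.transpose_mul, hQt, hXt]
      simp only [Matrix.mul_assoc]
      rw [← Matrix.mul_assoc Q Q, hQQ]
    rw [hE, Matrix.trace_mul_comm] at h0
    have hE2 : X * (Q * (X * Q)) * Q = (X * Q) * (X * Q) := by
      simp only [Matrix.mul_assoc, hQQ]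
    rw [hE2] at h0
    have hexp : ((X * Q) * (X * Q)).trace = t - 2 * b + a := by
      have hXQ : X * Q = X - X * P := by
        rw [hQdef, Matrix.mul_sub, Matrix.mul_one]
      rw [hXQ, Matrix.sub_mul, Matrix.mul_sub, Matrix.mul_sub, Matrix.trace_sub,
        Matrix.trace_sub, Matrix.trace_sub, e1, e4, e6,
        Matrix.trace_mul_comm (X * P) X, e4]
      ring
    rw [hexp] at h0
    exact h0
  have hMeq : (1 - G) * (Z * Z) = Z * Z - Z * (Z * G) ∨ True := Or.inr trivial
  have hMpsd : (1 - G).PosSemidef := by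
    have hQpsd : Q.PosSemidef := by
      have h := Matrix.posSemidef_conjTranspose_mul_self Q
      rwa [Matrix.conjTranspose_eq_transpose_of_trivial, hQt, hQQ] at h
    have h2 := hQpsd.conjTranspose_mul_mul_same V
    rw [Matrix.conjTranspose_eq_transpose_of_trivial] at h2
    have heq : Vᵀ * Q * V = 1 - G := by
      rw [hQdef, hPdef]
      simp only [Matrix.mul_sub, Matrix.sub_mul, Matrix.mul_one, Matrix.one_mul]
      rw [hV]
      congr 1
      simp only [← Matrix.mul_assoc, ← hWdef]
      rw [Matrix.mul_assoc, hWt, ← hGdef]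
    rwa [heq] at h2
  have hZZpsd : (Z * Z).PosSemidef := by
    have h := hZ.pow 2
    rwa [pow_two] at h
  have hT5 : ((1 - G) * (Z * Z)).trace = t - b := by
    rw [Matrix.sub_mul, Matrix.one_mul, Matrix.trace_sub, htdef, hbdef,
      Matrix.trace_mul_comm G, Matrix.mul_assoc]
  have hT6 : ((1 - G) * (Z * Z)).trace ≤ (1 - G).trace * t :=
    psd_trace_mul_le hMpsd hZZpsd
  have ht0 : 0 ≤ t := by
    have h := trace_transpose_mul_self_nonneg Z
    rwa [hZt] at h
  have hm0 : 0 ≤ (1 - G).trace := psd_trace_nonneg hMpsd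
  -- final assembly
  have hfinal : ((X - K)ᵀ * (X - K)).trace ≤ 2 * (1 - G).trace * t := by
    rw [hDD]; nlinarith [hT6, hT5, hPyth]
  have hZfrob : frobNorm Z = Real.sqrt t := by rw [frob_eq, hZt]
  rw [frob_eq, hZfrob]
  calc Real.sqrt (((X - K)ᵀ * (X - K)).trace)
      ≤ Real.sqrt (2 * (1 - G).trace * t) := Real.sqrt_le_sqrt hfinal
    _ = Real.sqrt 2 * Real.sqrt t * Real.sqrt ((1 - G).trace) := by
        rw [Real.sqrt_mul (by positivity), Real.sqrt_mul (by norm_num)]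
        ring
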